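/- For every non-negative integer n, the following identities of rational numbers hold: ∑_{k=1}^{n} L(2k+1)/(F(2k+1)² + 1) = 3/2 − L(2(n+1))/(F(2(n+1))² + 1), and ∑_{k=1}^{n} (L(2k+1)/(L(2k)·L(2k+2)))·((F(2k)² + 1)·(F(2k+2)² + 1)/(F(2k+1)² + 1)) = (F(2(n+1))² + 1)/L(2n+2) − 2/3. -/

import Mathlib

lemma step1 (a b : ℚ) (h : b ^ 2 - a * b - a ^ 2 = 1) :
    (2 * a + b) / (b ^ 2 + 1) = (2 * b - a) / (a ^ 2 + 1) - (3 * b + a) / ((a + b) ^ 2 + 1) := by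
  have h1 : (b : ℚ) ^ 2 + 1 ≠ 0 := by positivity
  have h2 : (a : ℚ) ^ 2 + 1 ≠ 0 := by positivity
  have h3 : ((a + b) : ℚ) ^ 2 + 1 ≠ 0 := by positivity
  field_simp
  linear_combination (-2*b - 2*b^3 - 4*a - 5*a*b^2 - 3*a^2*b - 2*a^3) * h

lemma step2 (a b : ℚ) (h : b ^ 2 - a * b - a ^ 2 = 1)
    (h4 : (2 * b - a) ≠ 0) (h5 : (3 * b + a) ≠ 0) :
    ((2 * a + b) / ((2 * b - a) * (3 * b + a))) *
      ((a ^ 2 + 1) * ((a + b) ^ 2 + 1) / (b ^ 2 + 1)) =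
    ((a + b) ^ 2 + 1) / (3 * b + a) - (a ^ 2 + 1) / (2 * b - a) := by
  have h1 : (b : ℚ) ^ 2 + 1 ≠ 0 := by positivity
  rw [div_mul_div_comm, div_sub_div _ _ h5 h4,
    div_eq_div_iff (mul_ne_zero (mul_ne_zero h4 h5) h1) (mul_ne_zero h5 h4)]
  linear_combination ((-12)*a^0*b^5 + (-28)*a^1*b^4 + (-11)*a^2*b^3 + (-12)*a^0*b^3 + (-4)*a^3*b^2 + (-22)*a^1*b^2 + (5)*a^4*b^1 + (6)*a^2*b^1 + (2)*a^5*b^0 + (4)*a^3*b^0) * h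

/-- two telescoping summation identities over the rationals. -/
theorem statement6 (F L : ℤ → ℤ)
    (hF0 : F 0 = 0) (hF1 : F 1 = 1) (hF : ∀ n : ℤ, F n = F (n - 1) + F (n - 2))
    (hL0 : L 0 = 2) (hL1 : L 1 = 1) (hL : ∀ n : ℤ, L n = L (n - 1) + L (n - 2))
    (n : ℕ) :
    (∑ k ∈ Finset.Icc 1 n,
        (L (2 * (k : ℤ) + 1) : ℚ) / ((F (2 * (k : ℤ) + 1) : ℚ) ^ 2 + 1) =
      3 / 2 - (L (2 * ((n : ℤ) + 1)) : ℚ) / ((F (2 * ((n : ℤ) + 1)) : ℚ) ^ 2 + 1)) ∧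
    (∑ k ∈ Finset.Icc 1 n,
        ((L (2 * (k : ℤ) + 1) : ℚ) / ((L (2 * (k : ℤ)) : ℚ) * (L (2 * (k : ℤ) + 2) : ℚ))) *
          (((F (2 * (k : ℤ)) : ℚ) ^ 2 + 1) * ((F (2 * (k : ℤ) + 2) : ℚ) ^ 2 + 1) /
            ((F (2 * (k : ℤ) + 1) : ℚ) ^ 2 + 1)) =
      ((F (2 * ((n : ℤ) + 1)) : ℚ) ^ 2 + 1) / (L (2 * (n : ℤ) + 2) : ℚ) - 2 / 3) := by
  have hF' : ∀ m : ℤ, F (m + 2) = F (m + 1) + F m := by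
    intro m; have := hF (m + 2)
    rw [show m + 2 - 1 = m + 1 by ring, show m + 2 - 2 = m by ring] at this; exact this
  have hL' : ∀ m : ℤ, L (m + 2) = L (m + 1) + L m := by
    intro m; have := hL (m + 2)
    rw [show m + 2 - 1 = m + 1 by ring, show m + 2 - 2 = m by ring] at this; exact this
  -- master bundle at even indices
  have master : ∀ k : ℕ,
      L (2 * (k : ℤ)) = 2 * F (2 * (k : ℤ) + 1) - F (2 * (k : ℤ)) ∧
      L (2 * (k : ℤ) + 1) = 2 * F (2 * (k : ℤ)) + F (2 * (k : ℤ) + 1) ∧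
      L (2 * (k : ℤ) + 2) = 3 * F (2 * (k : ℤ) + 1) + F (2 * (k : ℤ)) ∧
      F (2 * (k : ℤ) + 2) = F (2 * (k : ℤ)) + F (2 * (k : ℤ) + 1) ∧
      F (2 * (k : ℤ) + 1) ^ 2 - F (2 * (k : ℤ)) * F (2 * (k : ℤ) + 1)
        - F (2 * (k : ℤ)) ^ 2 = 1 ∧
      0 ≤ F (2 * (k : ℤ)) ∧ F (2 * (k : ℤ)) < F (2 * (k : ℤ) + 1) := by
    intro k
    induction k with
    | zero =>
      have e2 : F 2 = 1 := by simpa [hF0, hF1] using hF' 0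
      have l2 : L 2 = 3 := by simpa [hL0, hL1] using hL' 0
      norm_num [hF0, hF1, hL0, hL1, e2, l2]
    | succ k ih =>
      obtain ⟨l0, l1, l2, f2, hc, ha, hab⟩ := ih
      set a := F (2 * (k : ℤ)) with ha'
      set b := F (2 * (k : ℤ) + 1) with hb'
      have f3 : F (2 * (k : ℤ) + 3) = a + 2 * b := by
        have := hF' (2 * (k : ℤ) + 1)
        have e : (2 * (k : ℤ) + 1 + 2) = 2 * (k : ℤ) + 3 := by ring
        have e' : (2 * (k : ℤ) + 1 + 1) = 2 * (k : ℤ) + 2 := by ring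
        rw [e, e'] at this
        rw [this, f2]; ring
      have f4 : F (2 * (k : ℤ) + 4) = 2 * a + 3 * b := by
        have := hF' (2 * (k : ℤ) + 2)
        have e : (2 * (k : ℤ) + 2 + 2) = 2 * (k : ℤ) + 4 := by ring
        have e' : (2 * (k : ℤ) + 2 + 1) = 2 * (k : ℤ) + 3 := by ring
        rw [e, e'] at this
        rw [this, f3, f2]; ring
      have l3 : L (2 * (k : ℤ) + 3) = 3 * a + 4 * b := by
        have := hL' (2 * (k : ℤ) + 1)
        have e : (2 * (k : ℤ) + 1 + 2) = 2 * (k : ℤ) + 3 := by ring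
        have e' : (2 * (k : ℤ) + 1 + 1) = 2 * (k : ℤ) + 2 := by ring
        rw [e, e'] at this
        rw [this, l2, l1]; ring
      have l4 : L (2 * (k : ℤ) + 4) = 4 * a + 7 * b := by
        have := hL' (2 * (k : ℤ) + 2)
        have e : (2 * (k : ℤ) + 2 + 2) = 2 * (k : ℤ) + 4 := by ring
        have e' : (2 * (k : ℤ) + 2 + 1) = 2 * (k : ℤ) + 3 := by ring
        rw [e, e'] at this
        rw [this, l3, l2]; ring
      have ek : (2 * ((k : ℤ) + 1)) = 2 * (k : ℤ) + 2 := by ring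
      have ek1 : (2 * ((k : ℤ) + 1) + 1) = 2 * (k : ℤ) + 3 := by ring
      have ek2 : (2 * ((k : ℤ) + 1) + 2) = 2 * (k : ℤ) + 4 := by ring
      push_cast
      rw [ek2, ek1, ek, f2, f3, f4, l2, l3, l4]
      refine ⟨by ring, by ring, by ring, by ring, by linear_combination hc, by omega, by omega⟩
  -- per-step rational facts at index k ≥ 0
  -- main induction
  induction n with
  | zero =>
    have m0 := master 1
    norm_num at m0 ⊢
    obtain ⟨l0, l1, l2, f2, hc, ha, hab⟩ := m0
    have e2 : F 2 = 1 := by simpa [hF0, hF1] using hF' 0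
    have el2 : L 2 = 3 := by simpa [hL0, hL1] using hL' 0
    rw [e2, el2]
    norm_num
  | succ n ih =>
    obtain ⟨ih1, ih2⟩ := ih
    obtain ⟨l0, l1, l2, f2, hc, ha, hab⟩ := master (n + 1)
    push_cast at l0 l1 l2 f2 hc ha hab
    have ql0 : (L (2 * ((n : ℤ) + 1)) : ℚ)
        = 2 * (F (2 * ((n : ℤ) + 1) + 1) : ℚ) - (F (2 * ((n : ℤ) + 1)) : ℚ) := by
      rw [l0]; push_cast; ring
    have ql1 : (L (2 * ((n : ℤ) + 1) + 1) : ℚ)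
        = 2 * (F (2 * ((n : ℤ) + 1)) : ℚ) + (F (2 * ((n : ℤ) + 1) + 1) : ℚ) := by
      rw [l1]; push_cast; ring
    have ql2 : (L (2 * ((n : ℤ) + 1) + 2) : ℚ)
        = 3 * (F (2 * ((n : ℤ) + 1) + 1) : ℚ) + (F (2 * ((n : ℤ) + 1)) : ℚ) := by
      rw [l2]; push_cast; ring
    have qf2 : (F (2 * ((n : ℤ) + 1) + 2) : ℚ)
        = (F (2 * ((n : ℤ) + 1)) : ℚ) + (F (2 * ((n : ℤ) + 1) + 1) : ℚ) := by
      rw [f2]; push_cast; ring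
    set a : ℚ := (F (2 * ((n : ℤ) + 1)) : ℚ) with haq
    set b : ℚ := (F (2 * ((n : ℤ) + 1) + 1) : ℚ) with hbq
    have qhc : b ^ 2 - a * b - a ^ 2 = 1 := by
      rw [haq, hbq]
      have := congrArg (fun z : ℤ => (z : ℚ)) hc
      push_cast at this
      convert this using 1
    have qha : 0 ≤ a := by rw [haq]; exact_mod_cast ha
    have qhab : a < b := by rw [haq, hbq]; exact_mod_cast hab
    have hpos1 : (0:ℚ) < 2 * b - a := by linarith
    have hpos2 : (0:ℚ) < 3 * b + a := by linarith
    have hsum : ∀ (g : ℕ → ℚ), ∑ k ∈ Finset.Icc 1 (n + 1), g k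
        = (∑ k ∈ Finset.Icc 1 n, g k) + g (n + 1) := by
      intro g
      exact Finset.sum_Icc_succ_top (Nat.succ_le_succ (Nat.zero_le n)) g
    have ei : (2 * (((n:ℤ)) + 1 + 1)) = 2 * ((n : ℤ) + 1) + 2 := by ring
    constructor
    · rw [hsum, ih1]
      push_cast
      rw [ei, ql0, ql1, ql2, qf2]
      have := step1 a b qhc
      linarith [this]
    · rw [hsum, ih2]
      push_cast
      rw [ei, show (2 * ((n:ℤ)) + 2) = 2 * ((n : ℤ) + 1) from by ring,
        ql0, ql1, ql2, qf2]
      have := step2 a b qhc (ne_of_gt hpos1) (ne_of_gt hpos2)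
      linarith [this]
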